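/- Let k ≥ 4 be even and let H be a graph with ν(H) ≤ k−1, Δ(H) ≤ k−1, e(H) = f(k−1,k−1), and Gallai–Edmonds decomposition (D,A,C). Then C = ∅. -/

import Mathlib

open SimpleGraph

/-- Number of edges of a graph. -/
noncomputable def edgeCount {V : Type*} (G : SimpleGraph V) : ℕ := G.edgeSet.ncard

/-- Degree of a vertex. -/
noncomputable def deg {V : Type*} (G : SimpleGraph V) (v : V) : ℕ := (G.neighborSet v).ncard

/-- Maximum degree. -/
noncomputable def maxDeg {V : Type*} (G : SimpleGraph V) : ℕ := sSup (Set.range (deg G))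

/-- Matching number: maximum size of a matching. -/
noncomputable def matchNum {V : Type*} (G : SimpleGraph V) : ℕ :=
  sSup {n | ∃ M : G.Subgraph, M.IsMatching ∧ M.edgeSet.ncard = n}

/-- `G` contains a copy of `H` (a subgraph isomorphic to `H`). -/
def CopyIn {α β : Type*} (H : SimpleGraph α) (G : SimpleGraph β) : Prop :=
  ∃ f : H →g G, Function.Injective f

/-- The friendship graph `F_k`: `k` triangles sharing exactly one common vertex (vertex 0). -/
def friendship (k : ℕ) : SimpleGraph (Fin (2 * k + 1)) :=
  SimpleGraph.fromRel (fun a b => a.val = 0 ∨ b.val = 0 ∨ (a.val + 1) / 2 = (b.val + 1) / 2)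

/-- The star `K_{1,m}` with center 0 and `m` leaves. -/
def starGraph (m : ℕ) : SimpleGraph (Fin (m + 1)) :=
  SimpleGraph.fromRel (fun a b => a.val = 0 ∨ b.val = 0)

/-- The matching `mK_2` of `m` disjoint edges. -/
def matchGraph (m : ℕ) : SimpleGraph (Fin (2 * m)) :=
  SimpleGraph.fromRel (fun a b => a.val / 2 = b.val / 2)

/-- Turán number: max edges of an `n`-vertex graph with no copy of `H`. -/
noncomputable def exNum (n : ℕ) {α : Type*} (H : SimpleGraph α) : ℕ :=
  sSup {m | ∃ G : SimpleGraph (Fin n), ¬ CopyIn H G ∧ edgeCount G = m}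

/-- `f(ν, Δ)`: max edges of a graph with matching number ≤ ν and max degree ≤ Δ. -/
noncomputable def fMax (ν Δ : ℕ) : ℕ :=
  sSup {m | ∃ (n : ℕ) (G : SimpleGraph (Fin n)),
    matchNum G ≤ ν ∧ (∀ v, deg G v ≤ Δ) ∧ edgeCount G = m}

/-- A surjective edge-coloring of `K_n` using exactly `r` colors `0, …, r-1`. -/
def IsSurjColoring (n r : ℕ) (c : Sym2 (Fin n) → ℕ) : Prop :=
  (∀ e : Sym2 (Fin n), ¬ e.IsDiag → c e < r) ∧
  ∀ i < r, ∃ e : Sym2 (Fin n), ¬ e.IsDiag ∧ c e = i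

/-- The colored `K_n` contains a rainbow copy of `H`. -/
def RainbowCopy {α : Type*} {n : ℕ} (c : Sym2 (Fin n) → ℕ) (H : SimpleGraph α) : Prop :=
  ∃ f : H →g (⊤ : SimpleGraph (Fin n)), Function.Injective f ∧
    Set.InjOn (fun e => c (Sym2.map (⇑f) e)) H.edgeSet

/-- Anti-Ramsey number for the pair `{K_{1,k+1}, (k+1)K_2}`. -/
noncomputable def arPair (n k : ℕ) : ℕ :=
  sInf {r | ∀ c : Sym2 (Fin n) → ℕ, IsSurjColoring n r c →
    RainbowCopy c (_root_.starGraph (k + 1)) ∨ RainbowCopy c (matchGraph (k + 1))}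

/-- Anti-Ramsey number of the friendship graph `F_k`. -/
noncomputable def arFriend (n k : ℕ) : ℕ :=
  sInf {r | ∀ c : Sym2 (Fin n) → ℕ, IsSurjColoring n r c → RainbowCopy c (friendship k)}

/-- Anti-Ramsey number of a general graph `G`. -/
noncomputable def arGraph (n : ℕ) {α : Type*} (G : SimpleGraph α) : ℕ :=
  sInf {r | ∀ c : Sym2 (Fin n) → ℕ, IsSurjColoring n r c → RainbowCopy c G}

/-- Turán number of the family `{G − e : e ∈ E(G)}`. -/
noncomputable def exFamDel (n : ℕ) {α : Type*} (G : SimpleGraph α) : ℕ :=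
  sSup {m | ∃ H : SimpleGraph (Fin n),
    (∀ e ∈ G.edgeSet, ¬ CopyIn (G.deleteEdges {e}) H) ∧ edgeCount H = m}

section AuxLemmas

set_option linter.unusedSectionVars false

section Aux
variable {V : Type*} [Fintype V] {G : SimpleGraph V}

lemma zero_mem_matchSet (G : SimpleGraph V) :
    (0 : ℕ) ∈ {n | ∃ M : G.Subgraph, M.IsMatching ∧ M.edgeSet.ncard = n} := by
  refine ⟨⊥, ?_, by simp⟩
  intro v hv
  simp at hv

lemma bddAbove_matchSet (G : SimpleGraph V) :
    BddAbove {n | ∃ M : G.Subgraph, M.IsMatching ∧ M.edgeSet.ncard = n} := by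
  refine ⟨edgeCount G, ?_⟩
  rintro n ⟨M, -, rfl⟩
  exact Set.ncard_le_ncard M.edgeSet_subset (Set.toFinite _)

lemma exists_max_matching (G : SimpleGraph V) :
    ∃ M : G.Subgraph, M.IsMatching ∧ M.edgeSet.ncard = matchNum G :=
  Nat.sSup_mem ⟨0, zero_mem_matchSet G⟩ (bddAbove_matchSet G)

lemma le_matchNum {M : G.Subgraph} (hM : M.IsMatching) : M.edgeSet.ncard ≤ matchNum G :=
  le_csSup (bddAbove_matchSet G) ⟨M, hM, rfl⟩

lemma matchNum_le {B : ℕ} (h : ∀ M : G.Subgraph, M.IsMatching → M.edgeSet.ncard ≤ B) :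
    matchNum G ≤ B := by
  apply csSup_le ⟨0, zero_mem_matchSet G⟩
  rintro n ⟨M, hM, rfl⟩
  exact h M hM

lemma edge_meets_max_matching {M : G.Subgraph} (hM : M.IsMatching)
    (hmax : M.edgeSet.ncard = matchNum G) {a b : V} (hab : G.Adj a b) :
    a ∈ M.verts ∨ b ∈ M.verts := by
  by_contra hcon
  push_neg at hcon
  obtain ⟨ha, hb⟩ := hcon
  have hd : Disjoint M.support (G.subgraphOfAdj hab).support := by
    rw [hM.support_eq_verts, support_subgraphOfAdj]
    rw [Set.disjoint_right]
    rintro x (rfl | rfl) <;> assumption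
  have hsup : (M ⊔ G.subgraphOfAdj hab).IsMatching :=
    hM.sup (SimpleGraph.Subgraph.IsMatching.subgraphOfAdj hab) hd
  have hcard : (M ⊔ G.subgraphOfAdj hab).edgeSet.ncard = M.edgeSet.ncard + 1 := by
    rw [SimpleGraph.Subgraph.edgeSet_sup, edgeSet_subgraphOfAdj,
      Set.union_singleton, Set.ncard_insert_of_notMem ?_ (Set.toFinite _)]
    intro hmem
    exact ha (M.edge_vert hmem)
  have := le_matchNum hsup
  omega


-- a matching covers at most twice its size many vertices
lemma verts_ncard_le {M : G.Subgraph} (hM : M.IsMatching) :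
    M.verts.ncard ≤ 2 * M.edgeSet.ncard := by
  classical
  -- map each vertex to its matched edge
  set f : V → Sym2 V := fun v => if h : v ∈ M.verts then (hM.toEdge ⟨v, h⟩ : Sym2 V) else s(v, v) with hf
  have hmem : ∀ v (h : v ∈ M.verts), v ∈ f v ∧ f v ∈ M.edgeSet := by
    intro v h
    have : f v = (hM.toEdge ⟨v, h⟩ : Sym2 V) := by simp [hf, h]
    rw [this]
    constructor
    · obtain ⟨w, hw⟩ := hM h
      rw [hM.toEdge_eq_of_adj hw.1]
      exact Sym2.mem_mk_left v w
    · exact (hM.toEdge ⟨v, h⟩).2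
  have h1 : M.verts.toFinset.card ≤ 2 * (M.verts.toFinset.image f).card := by
    apply Finset.card_le_mul_card_image
    intro e he
    -- vertices mapping to e are members of e
    obtain ⟨a, b, rfl⟩ : ∃ a b, e = s(a, b) := by
      clear he
      induction e using Sym2.ind with
      | _ x y => exact ⟨x, y, rfl⟩
    have hsub : (M.verts.toFinset.filter fun x => f x = s(a, b)) ⊆ ({a, b} : Finset V) := by
      intro x hx
      simp only [Finset.mem_filter, Set.mem_toFinset] at hx
      obtain ⟨hx1, hx2⟩ := hx
      have : x ∈ s(a, b) := hx2 ▸ (hmem x hx1).1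
      rw [Sym2.mem_iff] at this
      simpa [Finset.mem_insert, Finset.mem_singleton] using this
    calc (M.verts.toFinset.filter fun x => f x = s(a, b)).card ≤ ({a, b} : Finset V).card :=
          Finset.card_le_card hsub
      _ ≤ 2 := Finset.card_insert_le _ _ |>.trans (by simp)
  have h2 : (M.verts.toFinset.image f) ⊆ M.edgeSet.toFinset := by
    intro e he
    obtain ⟨v, hv, rfl⟩ := Finset.mem_image.mp he
    rw [Set.mem_toFinset] at hv ⊢
    exact (hmem v hv).2
  have h3 : (M.verts.toFinset.image f).card ≤ M.edgeSet.toFinset.card := Finset.card_le_card h2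
  have e1 : M.verts.ncard = M.verts.toFinset.card := Set.ncard_eq_toFinset_card' _
  have e2 : M.edgeSet.ncard = M.edgeSet.toFinset.card := Set.ncard_eq_toFinset_card' _
  omega


lemma deg_eq_degree [DecidableRel G.Adj] (v : V) : deg G v = G.degree v := by
  rw [deg, ← card_neighborFinset_eq_degree, neighborFinset_def, Set.ncard_eq_toFinset_card']

lemma edgeCount_le_of {ν Δ : ℕ} (h1 : matchNum G ≤ ν) (h2 : ∀ v, deg G v ≤ Δ) :
    edgeCount G ≤ 2 * ν * Δ := by
  classical
  obtain ⟨M, hM, hmax⟩ := exists_max_matching G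
  have hsub : G.edgeSet.toFinset ⊆ M.verts.toFinset.biUnion (fun v => G.incidenceFinset v) := by
    intro e he
    rw [Set.mem_toFinset] at he
    obtain ⟨a, b, rfl⟩ : ∃ a b, e = s(a, b) := by
      clear he
      induction e using Sym2.ind with
      | _ x y => exact ⟨x, y, rfl⟩
    rw [SimpleGraph.mem_edgeSet] at he
    rcases edge_meets_max_matching hM hmax he with h | h
    · exact Finset.mem_biUnion.mpr ⟨a, Set.mem_toFinset.mpr h,
        (G.mem_incidenceFinset _ _).mpr ⟨he, Sym2.mem_mk_left a b⟩⟩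
    · exact Finset.mem_biUnion.mpr ⟨b, Set.mem_toFinset.mpr h,
        (G.mem_incidenceFinset _ _).mpr ⟨he, Sym2.mem_mk_right a b⟩⟩
  have hcard : G.edgeSet.toFinset.card ≤ M.verts.toFinset.card * Δ := by
    calc G.edgeSet.toFinset.card
        ≤ (M.verts.toFinset.biUnion (fun v => G.incidenceFinset v)).card :=
          Finset.card_le_card hsub
      _ ≤ M.verts.toFinset.card * Δ := by
          apply Finset.card_biUnion_le_card_mul
          intro v _
          rw [G.card_incidenceFinset_eq_degree, ← deg_eq_degree]
          exact h2 v
  have hv : M.verts.ncard ≤ 2 * ν := by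
    have := verts_ncard_le hM
    have h3 : M.edgeSet.ncard ≤ ν := hmax ▸ h1
    omega
  have e1 : M.verts.ncard = M.verts.toFinset.card := Set.ncard_eq_toFinset_card' _
  have e2 : edgeCount G = G.edgeSet.toFinset.card := Set.ncard_eq_toFinset_card' _
  have : M.verts.toFinset.card * Δ ≤ 2 * ν * Δ := Nat.mul_le_mul_right _ (by omega)
  omega

lemma bddAbove_fMaxSet (ν Δ : ℕ) :
    BddAbove {m | ∃ (n : ℕ) (G : SimpleGraph (Fin n)),
      matchNum G ≤ ν ∧ (∀ v, deg G v ≤ Δ) ∧ edgeCount G = m} := by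
  refine ⟨2 * ν * Δ, ?_⟩
  rintro m ⟨n, G, h1, h2, rfl⟩
  exact edgeCount_le_of h1 h2

lemma le_fMax {n : ℕ} (G : SimpleGraph (Fin n)) {ν Δ : ℕ}
    (h1 : matchNum G ≤ ν) (h2 : ∀ v, deg G v ≤ Δ) : edgeCount G ≤ fMax ν Δ :=
  le_csSup (bddAbove_fMaxSet ν Δ) ⟨n, G, h1, h2, rfl⟩


end Aux

section Iso
variable {V W : Type*} {G : SimpleGraph V} {G' : SimpleGraph W}

lemma subgraph_edgeSet_map (f : G →g G') (M : G.Subgraph) :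
    (M.map f).edgeSet = Sym2.map f '' M.edgeSet := by
  ext e
  induction e using Sym2.ind with
  | _ x y =>
    simp only [SimpleGraph.Subgraph.mem_edgeSet, Subgraph.map_adj, Relation.Map,
      Set.mem_image]
    constructor
    · rintro ⟨a, b, hab, rfl, rfl⟩
      exact ⟨s(a, b), hab, rfl⟩
    · rintro ⟨e', he', hmap⟩
      induction e' using Sym2.ind with
      | _ a b =>
        rw [Sym2.map_pair_eq, Sym2.eq_iff] at hmap
        rcases hmap with ⟨rfl, rfl⟩ | ⟨rfl, rfl⟩
        · exact ⟨a, b, he', rfl, rfl⟩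
        · exact ⟨b, a, he'.symm, rfl, rfl⟩

lemma edgeCount_eq_of_iso (φ : G ≃g G') : edgeCount G = edgeCount G' := by
  rw [edgeCount, edgeCount, ← Nat.card_coe_set_eq, ← Nat.card_coe_set_eq]
  exact Nat.card_congr φ.mapEdgeSet

lemma deg_eq_of_iso (φ : G ≃g G') (v : V) : deg G v = deg G' (φ v) := by
  rw [deg, deg, ← Nat.card_coe_set_eq, ← Nat.card_coe_set_eq]
  exact Nat.card_congr (φ.mapNeighborSet v)

lemma exists_matching_iso (ψ : G ≃g G') (M : G.Subgraph) (hM : M.IsMatching) :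
    ∃ M' : G'.Subgraph, M'.IsMatching ∧ M'.edgeSet.ncard = M.edgeSet.ncard := by
  refine ⟨M.map ψ.toHom, SimpleGraph.Subgraph.IsMatching.map ψ.toHom ψ.injective hM, ?_⟩
  rw [subgraph_edgeSet_map]
  exact Set.ncard_image_of_injective _ (Sym2.map.injective ψ.injective)

lemma matchNum_eq_of_iso (φ : G ≃g G') : matchNum G = matchNum G' := by
  unfold matchNum
  congr 1
  ext n
  constructor
  · rintro ⟨M, hM, rfl⟩
    obtain ⟨M', h1, h2⟩ := exists_matching_iso φ M hM
    exact ⟨M', h1, h2⟩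
  · rintro ⟨M, hM, rfl⟩
    obtain ⟨M', h1, h2⟩ := exists_matching_iso φ.symm M hM
    exact ⟨M', h1, h2⟩

end Iso

/-- The graph obtained from `H` by deleting edge `vw` and adding a new vertex joined to `v,w`. -/
def subdiv {V : Type*} (H : SimpleGraph V) (v w : V) : SimpleGraph (V ⊕ Unit) where
  Adj x y :=
    match x, y with
    | Sum.inl a, Sum.inl b => H.Adj a b ∧ s(a, b) ≠ s(v, w)
    | Sum.inl a, Sum.inr _ => a = v ∨ a = w
    | Sum.inr _, Sum.inl b => b = v ∨ b = w
    | Sum.inr _, Sum.inr _ => False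
  symm := by
    constructor
    rintro (a | a) (b | b) h
    · exact ⟨h.1.symm, by rw [Sym2.eq_swap]; exact h.2⟩
    · exact h
    · exact h
    · exact h
  loopless := by
    constructor
    rintro (a | a) h
    · exact H.loopless.irrefl a h.1
    · exact h

variable {V : Type*} (H : SimpleGraph V) (v w : V)

@[simp] lemma subdiv_adj_inl_inl {a b : V} :
    (subdiv H v w).Adj (Sum.inl a) (Sum.inl b) ↔ H.Adj a b ∧ s(a, b) ≠ s(v, w) := Iff.rfl
@[simp] lemma subdiv_adj_inl_inr {a : V} {u : Unit} :
    (subdiv H v w).Adj (Sum.inl a) (Sum.inr u) ↔ a = v ∨ a = w := Iff.rfl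
@[simp] lemma subdiv_adj_inr_inl {b : V} {u : Unit} :
    (subdiv H v w).Adj (Sum.inr u) (Sum.inl b) ↔ b = v ∨ b = w := Iff.rfl
@[simp] lemma subdiv_adj_inr_inr {u u' : Unit} :
    ¬ (subdiv H v w).Adj (Sum.inr u) (Sum.inr u') := fun h => h

lemma subdiv_edgeSet :
    (subdiv H v w).edgeSet =
      (Sym2.map Sum.inl '' (H.edgeSet \ {s(v, w)})) ∪
        {s(Sum.inl v, Sum.inr ()), s(Sum.inl w, Sum.inr ())} := by
  ext e
  induction e using Sym2.ind with
  | _ x y =>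
    constructor
    · intro he
      rw [SimpleGraph.mem_edgeSet] at he
      match x, y with
      | Sum.inl a, Sum.inl b =>
        exact Or.inl ⟨s(a, b), ⟨he.1, he.2⟩, rfl⟩
      | Sum.inl a, Sum.inr u =>
        rcases he with rfl | rfl
        · exact Or.inr (Or.inl rfl)
        · exact Or.inr (Or.inr rfl)
      | Sum.inr u, Sum.inl b =>
        rcases he with rfl | rfl
        · exact Or.inr (Or.inl (Sym2.eq_swap))
        · exact Or.inr (Or.inr (Sym2.eq_swap))
      | Sum.inr u, Sum.inr u' => exact absurd he (subdiv_adj_inr_inr H v w)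
    · intro he
      rcases he with ⟨e', ⟨he', hne⟩, hmap⟩ | he
      · induction e' using Sym2.ind with
        | _ a b =>
          rw [Sym2.map_pair_eq] at hmap
          rw [SimpleGraph.mem_edgeSet] at he'
          have hns : s(a, b) ∉ ({s(v, w)} : Set (Sym2 V)) := hne
          rw [Set.mem_singleton_iff] at hns
          rw [← hmap]
          exact (SimpleGraph.mem_edgeSet _).mpr ⟨he', hns⟩
      · rcases he with he | he
        · have he' : s(x, y) = s(Sum.inl v, Sum.inr ()) := he
          rw [he']
          exact (SimpleGraph.mem_edgeSet _).mpr (Or.inl rfl)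
        · have he' : s(x, y) = s(Sum.inl w, Sum.inr ()) := he
          rw [he']
          exact (SimpleGraph.mem_edgeSet _).mpr (Or.inr rfl)

lemma edgeCount_subdiv [Fintype V] (hvw : H.Adj v w) :
    edgeCount (subdiv H v w) = edgeCount H + 1 := by
  classical
  have hne : v ≠ w := hvw.ne
  set A : Set (Sym2 (V ⊕ Unit)) := Sym2.map Sum.inl '' (H.edgeSet \ {s(v, w)}) with hA
  set e1 : Sym2 (V ⊕ Unit) := s(Sum.inl v, Sum.inr ()) with he1
  set e2 : Sym2 (V ⊕ Unit) := s(Sum.inl w, Sum.inr ()) with he2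
  have h12 : e1 ≠ e2 := by
    intro h
    rw [he1, he2, Sym2.eq_iff] at h
    rcases h with ⟨h, -⟩ | ⟨h, -⟩
    · exact hne (Sum.inl_injective h)
    · exact Sum.inl_ne_inr h
  have hnotA : ∀ (u : V), s(Sum.inl u, Sum.inr ()) ∉ A := by
    rintro u ⟨e', -, hmap⟩
    induction e' using Sym2.ind with
    | _ a b =>
      rw [Sym2.map_pair_eq, Sym2.eq_iff] at hmap
      rcases hmap with ⟨-, h⟩ | ⟨h, -⟩ <;> exact Sum.inl_ne_inr h
  have hAfin : A.Finite := Set.toFinite _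
  have hcard1 : (A ∪ {e1, e2}).ncard = A.ncard + 2 := by
    have hu : A ∪ {e1, e2} = insert e1 (insert e2 A) := by
      rw [Set.union_comm]
      simp [Set.insert_union]
    have hm1 : e1 ∉ insert e2 A := by
      rw [Set.mem_insert_iff]
      push_neg
      exact ⟨h12, hnotA v⟩
    have hm2 : e2 ∉ A := hnotA w
    rw [hu, Set.ncard_insert_of_notMem hm1 (hAfin.insert e2),
      Set.ncard_insert_of_notMem hm2 hAfin]
  have hcard2 : A.ncard = (H.edgeSet \ {s(v, w)}).ncard := by
    rw [hA]
    exact Set.ncard_image_of_injective _ (Sym2.map.injective Sum.inl_injective)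
  have hcard3 : (H.edgeSet \ {s(v, w)}).ncard + 1 = edgeCount H :=
    Set.ncard_diff_singleton_add_one (H.mem_edgeSet.mpr hvw) (Set.toFinite _)
  rw [edgeCount, subdiv_edgeSet, ← hA, ← he1, ← he2]
  omega


lemma subdiv_nbr_inr : (subdiv H v w).neighborSet (Sum.inr ()) = {Sum.inl v, Sum.inl w} := by
  ext x
  cases x with
  | inl b =>
    simp only [mem_neighborSet, subdiv_adj_inr_inl, Set.mem_insert_iff, Set.mem_singleton_iff]
    constructor
    · rintro (rfl | rfl)
      · exact Or.inl rfl
      · exact Or.inr rfl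
    · rintro (h | h) <;> [exact Or.inl (Sum.inl_injective h); exact Or.inr (Sum.inl_injective h)]
  | inr u =>
    simp only [mem_neighborSet, Set.mem_insert_iff, Set.mem_singleton_iff]
    constructor
    · intro h
      exact absurd h (subdiv_adj_inr_inr H v w)
    · rintro (h | h) <;> exact absurd h.symm (by simp)

lemma deg_subdiv_inr (hvw : H.Adj v w) : deg (subdiv H v w) (Sum.inr ()) = 2 := by
  rw [deg, subdiv_nbr_inr]
  rw [Set.ncard_pair (by simpa using hvw.ne)]

lemma subdiv_nbr_inl_other {a : V} (hav : a ≠ v) (haw : a ≠ w) :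
    (subdiv H v w).neighborSet (Sum.inl a) = Sum.inl '' H.neighborSet a := by
  ext x
  cases x with
  | inl b =>
    simp only [mem_neighborSet, subdiv_adj_inl_inl, Set.mem_image]
    constructor
    · rintro ⟨h, -⟩
      exact ⟨b, h, rfl⟩
    · rintro ⟨b', hb', hb⟩
      cases Sum.inl_injective hb
      refine ⟨hb', ?_⟩
      intro hcon
      rw [Sym2.eq_iff] at hcon
      rcases hcon with ⟨rfl, -⟩ | ⟨rfl, -⟩ <;> simp_all
  | inr u =>
    simp only [mem_neighborSet, subdiv_adj_inl_inr, Set.mem_image]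
    constructor
    · rintro (rfl | rfl) <;> simp_all
    · rintro ⟨b', -, hb⟩
      exact absurd hb (by simp)

lemma deg_subdiv_inl_other {a : V} (hav : a ≠ v) (haw : a ≠ w) :
    deg (subdiv H v w) (Sum.inl a) = deg H a := by
  rw [deg, deg, subdiv_nbr_inl_other H v w hav haw,
    Set.ncard_image_of_injective _ Sum.inl_injective]

lemma subdiv_nbr_inl_v (hvw : H.Adj v w) :
    (subdiv H v w).neighborSet (Sum.inl v) =
      insert (Sum.inr ()) (Sum.inl '' (H.neighborSet v \ {w})) := by
  have hne := hvw.ne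
  ext x
  cases x with
  | inl b =>
    simp only [mem_neighborSet, subdiv_adj_inl_inl, Set.mem_insert_iff, Set.mem_image,
      Set.mem_diff, Set.mem_singleton_iff]
    constructor
    · rintro ⟨h, h2⟩
      refine Or.inr ⟨b, ⟨h, ?_⟩, rfl⟩
      intro rfl'
      subst rfl'
      exact h2 rfl
    · rintro (h | ⟨b', ⟨hb', hbw⟩, hb⟩)
      · exact absurd h (by simp)
      · cases Sum.inl_injective hb
        refine ⟨hb', ?_⟩
        intro hcon
        rw [Sym2.eq_iff] at hcon
        rcases hcon with ⟨-, rfl⟩ | ⟨rfl, -⟩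
        · exact hbw rfl
        · exact hne rfl
  | inr u =>
    cases u
    simp

lemma deg_subdiv_inl_v [Fintype V] (hvw : H.Adj v w) :
    deg (subdiv H v w) (Sum.inl v) = deg H v := by
  rw [deg, deg, subdiv_nbr_inl_v H v w hvw]
  have h1 : Sum.inr () ∉ Sum.inl '' (H.neighborSet v \ {w}) := by
    rintro ⟨b, -, hb⟩
    exact absurd hb (by simp)
  rw [Set.ncard_insert_of_notMem h1 (Set.toFinite _),
    Set.ncard_image_of_injective _ Sum.inl_injective]
  have := Set.ncard_diff_singleton_add_one (by exact hvw : w ∈ H.neighborSet v) (Set.toFinite _)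
  omega

lemma subdiv_comm : subdiv H v w = subdiv H w v := by
  ext x y
  cases x with
  | inl a =>
    cases y with
    | inl b =>
      rw [subdiv_adj_inl_inl, subdiv_adj_inl_inl,
        show s(w, v) = s(v, w) from Sym2.eq_swap]
    | inr u => exact or_comm
  | inr u =>
    cases y with
    | inl b => exact or_comm
    | inr u' => exact Iff.rfl

lemma subdiv_restrict [Fintype V] (M' : (subdiv H v w).Subgraph) (hM' : M'.IsMatching) :
    ∃ N : H.Subgraph, N.IsMatching ∧
      ((∃ u : V, M'.Adj (Sum.inl u) (Sum.inr ())) →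
        ∃ u : V, M'.Adj (Sum.inl u) (Sum.inr ()) ∧
          u ∉ N.verts ∧ M'.edgeSet.ncard = N.edgeSet.ncard + 1) ∧
      ((¬ ∃ u : V, M'.Adj (Sum.inl u) (Sum.inr ())) →
        M'.edgeSet.ncard = N.edgeSet.ncard) := by
  classical
  set N : H.Subgraph :=
    { verts := {a | ∃ b, M'.Adj (Sum.inl a) (Sum.inl b)}
      Adj := fun a b => M'.Adj (Sum.inl a) (Sum.inl b)
      adj_sub := fun h => ((subdiv_adj_inl_inl H v w).mp (M'.adj_sub h)).1
      edge_vert := fun {a b} h => ⟨b, h⟩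
      symm := ⟨fun a b h => M'.adj_symm h⟩ } with hN
  have hNadj : ∀ a b : V, N.Adj a b ↔ M'.Adj (Sum.inl a) (Sum.inl b) := fun a b => Iff.rfl
  have hNverts : ∀ a : V, a ∈ N.verts ↔ ∃ b, M'.Adj (Sum.inl a) (Sum.inl b) := fun a => Iff.rfl
  have hNmatch : N.IsMatching := by
    rintro a ⟨b, hb⟩
    refine ⟨b, hb, ?_⟩
    intro c hc
    obtain ⟨y, -, hy⟩ := hM' (M'.edge_vert hc)
    have h1 := hy _ hc
    have h2 := hy _ hb
    exact Sum.inl_injective (h1.trans h2.symm)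
  -- decomposition of the edge set
  set R : Set (Sym2 (V ⊕ Unit)) := M'.edgeSet ∩ {e | Sum.inr () ∈ e} with hR
  have hdecomp : M'.edgeSet = Sym2.map Sum.inl '' N.edgeSet ∪ R := by
    ext e
    induction e using Sym2.ind with
    | _ x y =>
      constructor
      · intro he
        have hadj : M'.Adj x y := he
        match x, y with
        | Sum.inl a, Sum.inl b =>
          exact Or.inl ⟨s(a, b), hadj, rfl⟩
        | Sum.inl a, Sum.inr u =>
          cases u
          exact Or.inr ⟨he, Sym2.mem_mk_right _ _⟩
        | Sum.inr u, Sum.inl b =>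
          cases u
          exact Or.inr ⟨he, Sym2.mem_mk_left _ _⟩
        | Sum.inr u, Sum.inr u' =>
          exact absurd (M'.adj_sub hadj) (subdiv_adj_inr_inr H v w)
      · rintro (⟨e', he', hmap⟩ | ⟨he, -⟩)
        · induction e' using Sym2.ind with
          | _ a b =>
            rw [Sym2.map_pair_eq] at hmap
            rw [← hmap]
            exact he'
        · exact he
  have hdisj : Disjoint (Sym2.map Sum.inl '' N.edgeSet) R := by
    rw [Set.disjoint_left]
    rintro e ⟨e', -, rfl⟩ ⟨-, hmem⟩
    have hmem' : Sum.inr () ∈ Sym2.map Sum.inl e' := hmem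
    rw [Sym2.mem_map] at hmem'
    obtain ⟨x, -, hx⟩ := hmem'
    exact absurd hx (by simp)
  have himg : (Sym2.map (Sum.inl : V → V ⊕ Unit) '' N.edgeSet).ncard = N.edgeSet.ncard :=
    Set.ncard_image_of_injective _ (Sym2.map.injective Sum.inl_injective)
  have hunion : M'.edgeSet.ncard = N.edgeSet.ncard + R.ncard := by
    rw [hdecomp, Set.ncard_union_eq hdisj (Set.toFinite _) (Set.toFinite _), himg]
  refine ⟨N, hNmatch, ?_, ?_⟩
  · rintro ⟨u, hu⟩
    refine ⟨u, hu, ?_, ?_⟩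
    · rintro ⟨b, hb⟩
      obtain ⟨y, -, hy⟩ := hM' (M'.edge_vert hu)
      have h1 := hy _ hu
      have h2 := hy _ hb
      rw [← h2] at h1
      exact absurd h1 (by simp)
    · have hRsing : R = {s(Sum.inl u, Sum.inr ())} := by
        ext e
        constructor
        · rintro ⟨he, hmem⟩
          induction e using Sym2.ind with
          | _ x y =>
            have hadj : M'.Adj x y := he
            have hmem2 : Sum.inr () ∈ s(x, y) := hmem
            rw [Sym2.mem_iff] at hmem2
            obtain ⟨z, -, hz⟩ := hM' (M'.edge_vert hu.symm)
            have h2 : Sum.inl u = z := hz _ hu.symm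
            rcases hmem2 with h | h
            · rw [← h] at hadj
              have h1 : y = z := hz _ hadj
              rw [Set.mem_singleton_iff, ← h, h1.trans h2.symm]
              exact Sym2.eq_swap
            · rw [← h] at hadj
              have h1 : x = z := hz _ hadj.symm
              rw [Set.mem_singleton_iff, ← h, h1.trans h2.symm]
        · rintro rfl
          exact ⟨hu, Sym2.mem_mk_right _ _⟩
      rw [hunion, hRsing, Set.ncard_singleton]
  · intro hno
    have hRempty : R = ∅ := by
      ext e
      simp only [Set.mem_empty_iff_false, iff_false]
      rintro ⟨he, hmem⟩
      induction e using Sym2.ind with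
      | _ x y =>
        have hadj : M'.Adj x y := he
        have hmem2 : Sum.inr () ∈ s(x, y) := hmem
        rw [Sym2.mem_iff] at hmem2
        rcases hmem2 with h | h
        · rw [← h] at hadj
          cases y with
          | inl b => exact hno ⟨b, hadj.symm⟩
          | inr u' => exact absurd (M'.adj_sub hadj) (by cases u'; exact subdiv_adj_inr_inr H v w)
        · rw [← h] at hadj
          cases x with
          | inl a => exact hno ⟨a, hadj⟩
          | inr u' => exact absurd (M'.adj_sub hadj) (by cases u'; exact subdiv_adj_inr_inr H v w)
    rw [hunion, hRempty, Set.ncard_empty]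
    omega


end AuxLemmas

/-- Claim 4: in an extremal graph for `f(k-1, k-1)` (`k ≥ 4` even), the Gallai–Edmonds
set `C` is empty. -/
theorem stmt19 {V : Type*} [Fintype V] (k : ℕ) (hk : 4 ≤ k) (hkeven : Even k)
    (H : SimpleGraph V)
    (hm : matchNum H ≤ k - 1) (hd : ∀ v, deg H v ≤ k - 1)
    (he : edgeCount H = fMax (k - 1) (k - 1)) :
    let D : Set V := {v | ∃ M : H.Subgraph, M.IsMatching ∧
      M.edgeSet.ncard = matchNum H ∧ v ∉ M.verts}
    let A : Set V := {v | v ∉ D ∧ ∃ u ∈ D, H.Adj v u}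
    let C : Set V := (Set.univ \ D) \ A
    C = (∅ : Set V) := by
  intro D A C
  rw [Set.eq_empty_iff_forall_notMem]
  intro v hv
  have hv' : v ∈ (Set.univ \ D) \ A := hv
  obtain ⟨hvD, hvA⟩ := hv'
  have hvnD : v ∉ D := hvD.2
  have hnbr : ∀ u, H.Adj v u → u ∉ D := by
    intro u hu huD
    exact hvA ⟨hvnD, u, huD, hu⟩
  obtain ⟨M₀, hM₀, hM₀c⟩ := exists_max_matching H
  have hvM : v ∈ M₀.verts := by
    by_contra h
    exact hvnD ⟨M₀, hM₀, hM₀c, h⟩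
  obtain ⟨w, hw, -⟩ := hM₀ hvM
  have hvw : H.Adj v w := M₀.adj_sub hw
  have hwnD : w ∉ D := hnbr w hvw
  -- the subdivided graph has matching number ≤ k - 1
  have hnum' : matchNum (subdiv H v w) ≤ k - 1 := by
    apply matchNum_le
    intro M' hM'
    obtain ⟨N, hN, hcase1, hcase2⟩ := subdiv_restrict H v w M' hM'
    by_cases hex : ∃ u, M'.Adj (Sum.inl u) (Sum.inr ())
    · obtain ⟨u, hu, huN, hcard⟩ := hcase1 hex
      have huvw : u = v ∨ u = w := M'.adj_sub hu
      have hle : N.edgeSet.ncard ≤ matchNum H := le_matchNum hN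
      have hne : N.edgeSet.ncard ≠ matchNum H := by
        intro heq
        rcases huvw with rfl | rfl
        · exact hvnD ⟨N, hN, heq, huN⟩
        · exact hwnD ⟨N, hN, heq, huN⟩
      omega
    · rw [hcase2 hex]
      exact (le_matchNum hN).trans hm
  -- degrees in the subdivided graph
  have hdeg' : ∀ x, deg (subdiv H v w) x ≤ k - 1 := by
    rintro (a | u)
    · by_cases hav : a = v
      · subst hav
        rw [deg_subdiv_inl_v H a w hvw]
        exact hd a
      · by_cases haw : a = w
        · subst haw
          rw [subdiv_comm, deg_subdiv_inl_v H a v hvw.symm]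
          exact hd a
        · rw [deg_subdiv_inl_other H v w hav haw]
          exact hd a
    · cases u
      rw [deg_subdiv_inr H v w hvw]
      omega
  -- transfer to a graph on `Fin n`
  have hcard : edgeCount (subdiv H v w) = edgeCount H + 1 := edgeCount_subdiv H v w hvw
  set n := Fintype.card (V ⊕ Unit) with hn
  set eq : (V ⊕ Unit) ≃ Fin n := Fintype.equivFin (V ⊕ Unit) with heq
  set ψ : (SimpleGraph.comap (⇑eq.symm.toEmbedding) (subdiv H v w)) ≃g subdiv H v w :=
    SimpleGraph.Iso.comap eq.symm (subdiv H v w) with hψ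
  set Gfin : SimpleGraph (Fin n) := SimpleGraph.comap (⇑eq.symm.toEmbedding) (subdiv H v w)
    with hGfin
  have h1 : matchNum Gfin = matchNum (subdiv H v w) := matchNum_eq_of_iso ψ
  have h2 : edgeCount Gfin = edgeCount (subdiv H v w) := edgeCount_eq_of_iso ψ
  have h3 : ∀ x, deg Gfin x ≤ k - 1 := by
    intro x
    rw [deg_eq_of_iso ψ x]
    exact hdeg' (ψ x)
  have hfin : edgeCount Gfin ≤ fMax (k - 1) (k - 1) :=
    le_fMax Gfin (h1 ▸ hnum') h3
  rw [h2, hcard, ← he] at hfin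
  omega
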